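/- Let 1 ≤ a < a+l ≤ k and let c_{a,l}^k(n) denote the number of C_{a,l}^k-avoiding permutations in S_n, and c_{a,l}^k(n;j) the number of such permutations with first letter j. Then for all n ≥ k: c_{a,l}^k(n) = (k-1)·c_{a,l}^k(n-1) + Σ_{j=a}^{n-k+a} c_{a,l}^k(n;j). -/

import Mathlib

open Finset

/-- `π` contains an occurrence of the generalized pattern given by `σ ∈ S_k`,
where `adj j` means that positions `j` and `j+1` of the pattern must be
matched to adjacent positions of the permutation. -/
def IsOcc {n k : ℕ} (π : Equiv.Perm (Fin n)) (σ : Equiv.Perm (Fin k)) (adj : ℕ → Prop) : Prop :=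
  ∃ ι : Fin k → Fin n, StrictMono ι ∧
    (∀ j : ℕ, ∀ hj : j + 1 < k, adj j → (ι ⟨j + 1, hj⟩ : ℕ) = (ι ⟨j, by omega⟩ : ℕ) + 1) ∧
    (∀ s t : Fin k, σ s < σ t ↔ π (ι s) < π (ι t))

/-- `π` avoids every pattern in `C_{a,l}^k` (patterns `σ₁σ₂-σ₃-⋯-σ_k` with
`σ₁ = a`, `σ₂ = a + l`, first two letters adjacent); values are `1`-based. -/
def AvoidsC (a l k : ℕ) {n : ℕ} (π : Equiv.Perm (Fin n)) : Prop :=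
  ∀ σ : Equiv.Perm (Fin k), ∀ h0 : 0 < k, ∀ h1 : 1 < k,
    (σ ⟨0, h0⟩ : ℕ) + 1 = a → (σ ⟨1, h1⟩ : ℕ) + 1 = a + l →
    ¬ IsOcc π σ (fun j => j = 0)

/-- `c_{a,l}^k(n)`. -/
noncomputable def cC (a l k n : ℕ) : ℕ :=
  Nat.card {π : Equiv.Perm (Fin n) // AvoidsC a l k π}

/-- `c_{a,l}^k(n; j)`: additionally the first letter of the permutation is `j` (1-based). -/
noncomputable def cCf (a l k n j : ℕ) : ℕ :=
  Nat.card {π : Equiv.Perm (Fin n) //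
    AvoidsC a l k π ∧ ∀ hn : 0 < n, (π ⟨0, hn⟩ : ℕ) + 1 = j}

namespace CCRec

open Equiv

variable {m : ℕ}

/-- Delete the first entry of a permutation, keeping relative order of the rest. -/
def del (π : Perm (Fin (m+1))) : Perm (Fin m) :=
  (finSuccAboveEquiv (0 : Fin (m+1))).trans
    ((π.subtypeEquiv (fun x => (π.injective.ne_iff (x := x) (y := 0)).symm)).trans
      (finSuccAboveEquiv (π 0)).symm)

lemma succAbove_del (π : Perm (Fin (m+1))) (i : Fin m) :
    (π 0).succAbove (del π i) = π i.succ := by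
  have h : (finSuccAboveEquiv (π 0)) (del π i)
      = ⟨π i.succ, π.injective.ne_iff.mpr (Fin.succ_ne_zero i)⟩ := by
    simp only [del, Equiv.trans_apply, Equiv.apply_symm_apply]
    apply Subtype.ext
    simp [finSuccAboveEquiv_apply, Equiv.subtypeEquiv_apply, Fin.succAbove_zero]
  simpa [finSuccAboveEquiv_apply] using congrArg Subtype.val h

lemma del_lt_iff (π : Perm (Fin (m+1))) (i j : Fin m) :
    del π i < del π j ↔ π i.succ < π j.succ := by
  rw [← Fin.succAbove_lt_succAbove_iff (p := π 0), succAbove_del, succAbove_del]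

/-- Insert value `v` at the front of a permutation. -/
def ins (v : Fin (m+1)) (ρ : Perm (Fin m)) : Perm (Fin (m+1)) :=
  (finSuccEquiv' (0 : Fin (m+1))).trans ((Equiv.optionCongr ρ).trans (finSuccEquiv' v).symm)

@[simp] lemma ins_zero (v : Fin (m+1)) (ρ : Perm (Fin m)) : ins v ρ 0 = v := by
  simp [ins, finSuccEquiv'_at, finSuccEquiv'_symm_none]

@[simp] lemma ins_succ (v : Fin (m+1)) (ρ : Perm (Fin m)) (i : Fin m) :
    ins v ρ i.succ = v.succAbove (ρ i) := by
  have h : i.succ = (0 : Fin (m+1)).succAbove i := by rw [Fin.succAbove_zero]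
  simp only [ins, Equiv.trans_apply]
  rw [h, finSuccEquiv'_succAbove]
  simp [finSuccEquiv'_symm_some]

lemma del_ins (v : Fin (m+1)) (ρ : Perm (Fin m)) : del (ins v ρ) = ρ := by
  apply Equiv.ext; intro i
  apply Fin.succAbove_right_injective (p := v)
  have h0 : ins v ρ 0 = v := ins_zero v ρ
  calc v.succAbove (del (ins v ρ) i) = ((ins v ρ) 0).succAbove (del (ins v ρ) i) := by rw [h0]
    _ = (ins v ρ) i.succ := succAbove_del _ i
    _ = v.succAbove (ρ i) := ins_succ v ρ i

lemma ins_del (π : Perm (Fin (m+1))) : ins (π 0) (del π) = π := by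
  apply Equiv.ext; intro x
  induction x using Fin.cases with
  | zero => rw [ins_zero]
  | succ i => rw [ins_succ, succAbove_del]

lemma avoids_del {a l k : ℕ} {π : Perm (Fin (m+1))} (h : AvoidsC a l k π) :
    AvoidsC a l k (del π) := by
  rintro σ h0 h1 hs0 hs1 ⟨ι, mono, adj, ord⟩
  refine h σ h0 h1 hs0 hs1 ⟨Fin.succ ∘ ι, Fin.strictMono_succ.comp mono, ?_, ?_⟩
  · intro j hj hadj
    have := adj j hj hadj
    simp only [Function.comp_apply, Fin.val_succ]
    omega
  · intro s t
    rw [ord s t, del_lt_iff]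
    rfl

lemma avoids_ins {a l k : ℕ} (ha : 1 ≤ a) (hak : a < k) (hkn : k ≤ m + 1)
    {v : Fin (m+1)} (hv : (v : ℕ) + 1 < a ∨ m + 1 - k + a < (v : ℕ) + 1)
    {ρ : Perm (Fin m)} (h : AvoidsC a l k ρ) : AvoidsC a l k (ins v ρ) := by
  rintro σ h0 h1 hs0 hs1 ⟨ι, mono, adj, ord⟩
  set π := ins v ρ with hπ
  by_cases hι : ι ⟨0, h0⟩ = 0
  · -- first position used: rank of v forces a ≤ v+1 ≤ m+1-k+a, contradiction
    have hπ0 : π (ι ⟨0, h0⟩) = v := by rw [hι]; exact ins_zero v ρ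
    set c : Fin k := σ ⟨0, h0⟩ with hc
    have hcard1 : (univ.filter (fun t => σ t < c)).card = (c : ℕ) := by
      rw [← Fin.card_Iio c]
      apply Finset.card_bij' (fun t _ => σ t) (fun y _ => σ.symm y)
      · intro t ht
        simp only [mem_filter] at ht
        simpa [mem_Iio] using ht.2
      · intro y hy
        simp only [mem_Iio] at hy
        simp [mem_filter, hy]
      · intro t _; simp
      · intro y _; simp
    have hcard2 : (univ.filter (fun t => c < σ t)).card = k - 1 - (c : ℕ) := by
      rw [← Fin.card_Ioi c]
      apply Finset.card_bij' (fun t _ => σ t) (fun y _ => σ.symm y)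
      · intro t ht
        simp only [mem_filter] at ht
        simpa [mem_Ioi] using ht.2
      · intro y hy
        simp only [mem_Ioi] at hy
        simp [mem_filter, hy]
      · intro t _; simp
      · intro y _; simp
    have hle1 : (c : ℕ) ≤ (v : ℕ) := by
      rw [← hcard1, ← Fin.card_Iio v]
      apply Finset.card_le_card_of_injOn (fun t => π (ι t))
      · intro t ht
        simp only [mem_coe, mem_filter] at ht
        rw [mem_coe, mem_Iio, ← hπ0]
        exact (ord t ⟨0, h0⟩).mp ht.2
      · exact Set.injOn_of_injective (π.injective.comp mono.injective)
    have hle2 : k - 1 - (c : ℕ) ≤ m - (v : ℕ) := by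
      have : (Finset.Ioi v).card = m + 1 - 1 - (v : ℕ) := Fin.card_Ioi v
      rw [← hcard2]
      calc (univ.filter (fun t => c < σ t)).card ≤ (Finset.Ioi v).card := by
            apply Finset.card_le_card_of_injOn (fun t => π (ι t))
            · intro t ht
              simp only [mem_coe, mem_filter] at ht
              rw [mem_coe, mem_Ioi, ← hπ0]
              exact (ord ⟨0, h0⟩ t).mp ht.2
            · exact Set.injOn_of_injective (π.injective.comp mono.injective)
        _ = m - (v : ℕ) := by rw [this]; omega
    have hvm : (v : ℕ) ≤ m := Nat.lt_succ_iff.mp v.isLt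
    omega
  · -- first position unused: pull back to ρ
    have hne : ∀ s, ι s ≠ 0 := by
      intro s hs
      apply hι
      have h01 : ι ⟨0, h0⟩ ≤ ι s := mono.monotone (by exact Fin.mk_le_of_le_val (Nat.zero_le _))
      rw [hs] at h01
      exact Fin.le_zero_iff.mp h01
    refine h σ h0 h1 hs0 hs1 ⟨fun s => (ι s).pred (hne s), ?_, ?_, ?_⟩
    · intro s t hst
      exact Fin.pred_lt_pred_iff.mpr (mono hst)
    · intro j hj hadj
      have hadj' := adj j hj hadj
      have hp : (ι ⟨j, by omega⟩ : ℕ) ≠ 0 := by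
        intro h'
        exact hne ⟨j, by omega⟩ (Fin.ext h')
      simp only [Fin.coe_pred]
      omega
    · intro s t
      rw [ord s t]
      have e : ∀ s, π (ι s) = v.succAbove (ρ ((ι s).pred (hne s))) := by
        intro s
        conv_lhs => rw [← Fin.succ_pred (ι s) (hne s)]
        exact ins_succ v ρ _
      rw [e s, e t, Fin.succAbove_lt_succAbove_iff]

lemma card_first_eq {a l k : ℕ} (ha : 1 ≤ a) (hak : a < k) (hkn : k ≤ m + 1)
    (v : Fin (m+1)) (hv : (v : ℕ) + 1 < a ∨ m + 1 - k + a < (v : ℕ) + 1) :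
    Nat.card {π : Perm (Fin (m+1)) // AvoidsC a l k π ∧ π 0 = v} =
      Nat.card {ρ : Perm (Fin m) // AvoidsC a l k ρ} := by
  apply Nat.card_congr
  exact
    { toFun := fun x => ⟨del x.1, avoids_del x.2.1⟩
      invFun := fun y => ⟨ins v y.1, avoids_ins ha hak hkn hv y.2, ins_zero v y.1⟩
      left_inv := fun x => Subtype.ext (by
        obtain ⟨π, hA, hv'⟩ := x
        show ins v (del π) = π
        rw [← hv']
        exact ins_del π)
      right_inv := fun y => Subtype.ext (del_ins v y.1) }

end CCRec

theorem cC_rec (a l k n : ℕ) (ha : 1 ≤ a) (hl : 1 ≤ l) (hk : a + l ≤ k) (hn : k ≤ n) :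
    cC a l k n = (k - 1) * cC a l k (n - 1) +
      ∑ j ∈ Finset.Icc a (n - k + a), cCf a l k n j := by
  classical
  obtain ⟨m, rfl⟩ : ∃ m, n = m + 1 := ⟨n - 1, by omega⟩
  have hn0 : 0 < m + 1 := Nat.succ_pos m
  -- Part A: count by first letter
  have hA : cC a l k (m+1) = ∑ j ∈ Icc 1 (m+1), cCf a l k (m+1) j := by
    rw [cC, Nat.card_eq_fintype_card, Fintype.card_subtype]
    rw [Finset.card_eq_sum_card_fiberwise
      (f := fun π : Equiv.Perm (Fin (m+1)) => (π ⟨0, hn0⟩ : ℕ) + 1) (t := Icc 1 (m+1))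
      (fun π _ => by
        simp only [coe_Icc, Set.mem_Icc, mem_coe, mem_Icc]
        exact ⟨Nat.le_add_left 1 _, Nat.succ_le_of_lt (π ⟨0, hn0⟩).isLt⟩)]
    refine Finset.sum_congr rfl fun j _ => ?_
    rw [cCf, Nat.card_eq_fintype_card, Fintype.card_subtype]
    congr 1
    ext π
    simp only [mem_filter, mem_univ, true_and]
    constructor
    · rintro ⟨hA', hf⟩; exact ⟨hA', fun _ => hf⟩
    · rintro ⟨hA', hf⟩; exact ⟨hA', hf hn0⟩
  -- Part B: extreme first letters
  have hB : ∀ j ∈ Icc 1 (m+1), (j < a ∨ m+1-k+a < j) → cCf a l k (m+1) j = cC a l k m := by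
    intro j hj hcond
    rw [mem_Icc] at hj
    set v : Fin (m+1) := ⟨j-1, by omega⟩ with hvdef
    have hv1 : (v : ℕ) + 1 = j := by simp only [hvdef]; omega
    have e1 : ∀ π : Equiv.Perm (Fin (m+1)),
        ((∀ hn : 0 < m+1, (π ⟨0, hn⟩ : ℕ) + 1 = j) ↔ π 0 = v) := by
      intro π
      have h0 : (⟨0, hn0⟩ : Fin (m+1)) = 0 := rfl
      constructor
      · intro h
        have := h hn0
        rw [h0] at this
        apply Fin.ext
        show (π 0 : ℕ) = j - 1
        omega
      · intro h hn
        have h0' : (⟨0, hn⟩ : Fin (m+1)) = 0 := rfl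
        rw [h0', h, ← hv1]
    rw [cCf,
      Nat.card_congr (Equiv.subtypeEquivRight (fun π => and_congr_right (fun _ => e1 π))),
      CCRec.card_first_eq ha (by omega) (by omega) v (by omega), cC]
  rw [hA]
  have hIcc : Icc 1 (m+1) = Ioc 0 (m+1) := Finset.Icc_add_one_left_eq_Ioc 0 (m+1)
  have hsplit : ∑ j ∈ Icc 1 (m+1), cCf a l k (m+1) j =
      (∑ j ∈ Ioc 0 (a-1), cCf a l k (m+1) j +
       ∑ j ∈ Ioc (a-1) (m+1-k+a), cCf a l k (m+1) j) +
      ∑ j ∈ Ioc (m+1-k+a) (m+1), cCf a l k (m+1) j := by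
    rw [hIcc,
      ← Finset.sum_Ioc_consecutive _ (show 0 ≤ m+1-k+a by omega) (show m+1-k+a ≤ m+1 by omega),
      ← Finset.sum_Ioc_consecutive _ (show 0 ≤ a-1 by omega) (show a-1 ≤ m+1-k+a by omega)]
  have hmid : Ioc (a-1) (m+1-k+a) = Icc a (m+1-k+a) := by
    rw [← Finset.Icc_add_one_left_eq_Ioc]
    congr 1
    omega
  have h1 : ∑ j ∈ Ioc 0 (a-1), cCf a l k (m+1) j = (a-1) * cC a l k m := by
    calc ∑ j ∈ Ioc 0 (a-1), cCf a l k (m+1) j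
        = ∑ _j ∈ Ioc 0 (a-1), cC a l k m := Finset.sum_congr rfl (fun j hj => by
            rw [mem_Ioc] at hj
            exact hB j (by rw [mem_Icc]; omega) (Or.inl (by omega)))
      _ = (a-1) * cC a l k m := by
            rw [Finset.sum_const, Nat.card_Ioc, smul_eq_mul, Nat.sub_zero]
  have h3 : ∑ j ∈ Ioc (m+1-k+a) (m+1), cCf a l k (m+1) j = (k-a) * cC a l k m := by
    calc ∑ j ∈ Ioc (m+1-k+a) (m+1), cCf a l k (m+1) j
        = ∑ _j ∈ Ioc (m+1-k+a) (m+1), cC a l k m := Finset.sum_congr rfl (fun j hj => by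
            rw [mem_Ioc] at hj
            exact hB j (by rw [mem_Icc]; omega) (Or.inr (by omega)))
      _ = (k-a) * cC a l k m := by
            rw [Finset.sum_const, Nat.card_Ioc, smul_eq_mul]
            congr 1
            omega
  rw [hsplit, hmid, h1, h3]
  have hsum : (a-1) * cC a l k m + (k-a) * cC a l k m = (k-1) * cC a l k m := by
    rw [← add_mul]
    congr 1
    omega
  have hm1 : m + 1 - 1 = m := rfl
  rw [hm1]
  omega
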